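/- Let V be a 4-dimensional complex vector space with a nondegenerate alternating bilinear form σ, and let A ∈ 𝔰𝔭(V,σ) with A ∘ A = 0 and rank A ≤ 1. Then there exists a unique t ∈ W with ε(t) = A, and this t satisfies τ(t) = t; i.e. the fiber of ε over a rank ≤ 1 element of Z consists of a unique point, which is fixed by τ. -/

import Mathlib

open TensorProduct

/-- The endomorphism `ε(v ⊗ w) : x ↦ σ(v,x)·w + σ(w,x)·v` of `V`, for `v w : V`. -/
def eps {V : Type*} [AddCommGroup V] [Module ℂ V]
    (σ : V →ₗ[ℂ] V →ₗ[ℂ] ℂ) (v w : V) : V →ₗ[ℂ] V :=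
  (σ v).smulRight w + (σ w).smulRight v

/-- Let `V` be a 4-dimensional complex vector space with a nondegenerate
alternating bilinear form `σ`, and let `A ∈ 𝔰𝔭(V,σ)` with `A ∘ A = 0` and `rank A ≤ 1`.
Then there exists a unique `t ∈ W` with `ε(t) = A`, and this `t` satisfies `τ(t) = t`
(where `τ` is the involution of `V ⊗ V` swapping the two factors); i.e. the fiber of `ε`
over a rank `≤ 1` element of `Z` consists of a unique point, which is fixed by `τ`. -/
theorem eps_fiber_over_rank_le_one
    {V : Type*} [AddCommGroup V] [Module ℂ V] [FiniteDimensional ℂ V]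
    (hdim : Module.finrank ℂ V = 4)
    (σ : V →ₗ[ℂ] V →ₗ[ℂ] ℂ)
    (halt : ∀ v : V, σ v v = 0)
    (hnd : ∀ v : V, (∀ w : V, σ v w = 0) → v = 0)
    (A : V →ₗ[ℂ] V)
    (hA : ∀ v w : V, σ (A v) w + σ v (A w) = 0)
    (hA2 : A ∘ₗ A = 0)
    (hrk : Module.finrank ℂ (LinearMap.range A) ≤ 1) :
    ∃ t : V ⊗[ℂ] V,
      (∃ v w : V, σ v w = 0 ∧ t = v ⊗ₜ[ℂ] w ∧ eps σ v w = A) ∧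
      (TensorProduct.comm ℂ V V) t = t ∧
      ∀ t' : V ⊗[ℂ] V,
        (∃ v w : V, σ v w = 0 ∧ t' = v ⊗ₜ[ℂ] w ∧ eps σ v w = A) → t' = t := by
  -- basic facts about σ
  have hskew : ∀ v w : V, σ w v = -σ v w := by
    intro v w
    have h := halt (v + w)
    simp only [map_add, LinearMap.add_apply, halt] at h
    linear_combination h
  have hex : ∀ v : V, v ≠ 0 → ∃ x : V, σ v x ≠ 0 := by
    intro v hv
    by_contra h
    push_neg at h
    exact hv (hnd v h)
  have heps : ∀ (v w x : V), eps σ v w x = σ v x • w + σ w x • v := by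
    intro v w x
    simp [eps]
  -- a helper to extract multiples: if e • u = y with e ≠ 0 then u = e⁻¹ • y
  have hsolve : ∀ (e : ℂ) (u y : V), e ≠ 0 → e • u = y → u = e⁻¹ • y := by
    intro e u y he h
    rw [← h, smul_smul, inv_mul_cancel₀ he, one_smul]
  by_cases hA0 : A = 0
  · -- Case A = 0 : t = 0 works
    refine ⟨0, ⟨0, 0, by simp [halt], by simp, by ext x; simp [eps, hA0]⟩, by simp, ?_⟩
    rintro t' ⟨v, w, hvw, rfl, hepsA⟩
    have hzero : ∀ x : V, σ v x • w + σ w x • v = 0 := by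
      intro x
      have := congrArg (fun B : V →ₗ[ℂ] V => B x) hepsA
      simpa [heps, hA0] using this
    by_cases hw : w = 0
    · simp [hw]
    obtain ⟨x, hx⟩ := hex w hw
    have hv : v = ((σ w x)⁻¹ * (-σ v x)) • w := by
      have h : σ w x • v = (-σ v x) • w := by
        linear_combination (norm := module) hzero x
      have := hsolve (σ w x) v ((-σ v x) • w) hx h
      rwa [smul_smul] at this
    set lam : ℂ := (σ w x)⁻¹ * (-σ v x) with hlam
    have h2 : (2 * lam * σ w x) • w = 0 := by
      have h := hzero x
      rw [hv, map_smul] at h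
      simp only [LinearMap.smul_apply, smul_eq_mul, smul_smul] at h
      linear_combination (norm := module) h
    have hlam0 : lam = 0 := by
      by_contra hl
      apply hw
      have hne : (2 * lam * σ w x) ≠ 0 := by
        simp only [mul_ne_zero_iff]
        exact ⟨⟨two_ne_zero, hl⟩, hx⟩
      exact (smul_eq_zero.mp h2).resolve_left hne
    rw [hv, hlam0, zero_smul, TensorProduct.zero_tmul]
  · -- Case A ≠ 0
    -- a generator g of the range of A
    obtain ⟨g₀, hg₀⟩ := (finrank_le_one_iff).mp hrk
    have hgen : ∀ x : V, ∃ c : ℂ, A x = c • (g₀ : V) := by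
      intro x
      obtain ⟨c, hc⟩ := hg₀ ⟨A x, LinearMap.mem_range_self A x⟩
      exact ⟨c, by simpa [Subtype.ext_iff] using hc.symm⟩
    set g : V := (g₀ : V) with hgdef
    have hgne : g ≠ 0 := by
      intro hg
      apply hA0
      ext x
      obtain ⟨c, hc⟩ := hgen x
      simp [hc, hg]
    choose f hf using hgen
    -- symplectic relation forces f x = c * σ g x
    have hrel : ∀ x y : V, f x * σ g y = f y * σ g x := by
      intro x y
      have h := hA x y
      rw [hf x, hf y, map_smul] at h
      have h2 : σ x (f y • g) = f y * σ x g := by simp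
      rw [h2, hskew g x] at h
      simp only [LinearMap.smul_apply, smul_eq_mul] at h
      linear_combination h
    obtain ⟨y₀, hy₀⟩ := hex g hgne
    set c : ℂ := f y₀ / σ g y₀ with hcdef
    have hAx : ∀ x : V, A x = (c * σ g x) • g := by
      intro x
      rw [hf x]
      congr 1
      have h := hrel x y₀
      rw [hcdef, div_mul_eq_mul_div, eq_div_iff hy₀]
      linear_combination h
    have hcne : c ≠ 0 := by
      intro hc
      apply hA0
      ext x
      simp [hAx x, hc]
    -- key lemma: every witness has the form lam • (v₀ ⊗ v₀) with explicit A
    have hwit : ∀ v w : V, σ v w = 0 → eps σ v w = A →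
        ∃ (lam : ℂ) (v₀ : V), v₀ ≠ 0 ∧
          v ⊗ₜ[ℂ] w = lam • (v₀ ⊗ₜ[ℂ] v₀) ∧
          ∀ x : V, A x = (2 * lam * σ v₀ x) • v₀ := by
      intro v w hvw hepsA
      have hAxx : ∀ x : V, σ v x • w + σ w x • v = A x := by
        intro x
        have := congrArg (fun B : V →ₗ[ℂ] V => B x) hepsA
        simpa [heps] using this
      have hvne : v ≠ 0 := by
        intro h
        apply hA0
        ext x
        have h2 := hAxx x
        rw [h] at h2
        simpa using h2.symm
      have hwne : w ≠ 0 := by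
        intro h
        apply hA0
        ext x
        have h2 := hAxx x
        rw [h] at h2
        simpa using h2.symm
      -- w is a multiple of v
      have hdep : ∃ lam : ℂ, w = lam • v := by
        by_contra hno
        push_neg at hno
        -- independence of w and v
        have hIndep : ∀ a b : ℂ, a • w + b • v = 0 → a = 0 ∧ b = 0 := by
          intro a b hab
          by_cases ha : a = 0
          · refine ⟨ha, ?_⟩
            rw [ha, zero_smul, zero_add] at hab
            exact (smul_eq_zero.mp hab).resolve_right hvne
          · exfalso
            apply hno (a⁻¹ * (-b))
            have h : a • w = (-b) • v := by
              linear_combination (norm := module) hab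
            have := hsolve a w ((-b) • v) ha h
            rwa [smul_smul] at this
        -- scalar identities from comparing A x with A y₀
        have hco : ∀ x : V,
            (c * σ g y₀ * σ v x - c * σ g x * σ v y₀) • w
              + (c * σ g y₀ * σ w x - c * σ g x * σ w y₀) • v = 0 := by
          intro x
          have h1 := hAxx x
          rw [hAx x] at h1
          have h2 := hAxx y₀
          rw [hAx y₀] at h2
          linear_combination (norm := module)
            (c * σ g y₀) • h1 - (c * σ g x) • h2
        have hveq : ∀ x : V, σ g y₀ * σ v x = σ g x * σ v y₀ := by
          intro x
          have h := (hIndep _ _ (hco x)).1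
          have h2 : c * (σ g y₀ * σ v x - σ g x * σ v y₀) = 0 := by
            linear_combination h
          have := (mul_eq_zero.mp h2).resolve_left hcne
          linear_combination this
        have hweq : ∀ x : V, σ g y₀ * σ w x = σ g x * σ w y₀ := by
          intro x
          have h := (hIndep _ _ (hco x)).2
          have h2 : c * (σ g y₀ * σ w x - σ g x * σ w y₀) = 0 := by
            linear_combination h
          have := (mul_eq_zero.mp h2).resolve_left hcne
          linear_combination this
        -- hence v and w are multiples of g
        have hvg : σ g y₀ • v = σ v y₀ • g := by
          apply sub_eq_zero.mp
          apply hnd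
          intro x
          have := hveq x
          rw [map_sub, LinearMap.sub_apply]
          simp only [map_smul, LinearMap.smul_apply, smul_eq_mul]
          linear_combination this
        have hwg : σ g y₀ • w = σ w y₀ • g := by
          apply sub_eq_zero.mp
          apply hnd
          intro x
          have := hweq x
          rw [map_sub, LinearMap.sub_apply]
          simp only [map_smul, LinearMap.smul_apply, smul_eq_mul]
          linear_combination this
        -- so (σ v y₀) • w - (σ w y₀) • v = 0
        have hfin0 : σ g y₀ • (σ v y₀ • w + (-σ w y₀) • v) = 0 := by
          linear_combination (norm := module)
            (σ v y₀) • hwg - (σ w y₀) • hvg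
        have hfin : σ v y₀ • w + (-σ w y₀) • v = 0 :=
          (smul_eq_zero.mp hfin0).resolve_left hy₀
        have h1 := hIndep _ _ hfin
        -- σ v y₀ = 0 and σ w y₀ = 0, so A y₀ = 0, contradicting σ g y₀ ≠ 0
        have hAy₀ := hAxx y₀
        rw [hAx y₀, h1.1, zero_smul] at hAy₀
        have h2 : σ w y₀ = 0 := by
          have := h1.2
          linear_combination -this
        rw [h2, zero_smul, zero_add] at hAy₀
        have : c * σ g y₀ = 0 := by
          rcases smul_eq_zero.mp hAy₀.symm with h | h
          · exact h
          · exact absurd h hgne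
        exact hy₀ ((mul_eq_zero.mp this).resolve_left hcne)
      obtain ⟨lam, hlam⟩ := hdep
      refine ⟨lam, v, hvne, ?_, ?_⟩
      · rw [hlam, TensorProduct.tmul_smul]
      · intro x
        have h := hAxx x
        rw [hlam, map_smul] at h
        simp only [LinearMap.smul_apply, smul_eq_mul, smul_smul] at h
        rw [← h]
        match_scalars <;> ring
    -- construct the canonical witness t = (d • g) ⊗ (d • g) with 2 d² = c
    obtain ⟨d, hd⟩ : ∃ d : ℂ, d ^ 2 = c / 2 := IsAlgClosed.exists_pow_nat_eq (c / 2) two_pos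
    have hdg : σ (d • g) (d • g) = 0 := by
      simp [halt]
    have hepst : eps σ (d • g) (d • g) = A := by
      ext x
      rw [heps, hAx x]
      simp only [map_smul, LinearMap.smul_apply, smul_eq_mul, smul_smul]
      match_scalars
      linear_combination (2 * σ g x) * hd
    refine ⟨(d • g) ⊗ₜ[ℂ] (d • g), ⟨d • g, d • g, hdg, rfl, hepst⟩, ?_, ?_⟩
    · rw [TensorProduct.comm_tmul]
    · rintro t' ⟨v, w, hvw, rfl, hepsA⟩
      obtain ⟨lam, v₀, hv₀, ht', hAform⟩ := hwit v w hvw hepsA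
      obtain ⟨lam', v₁, hv₁, ht, hAform'⟩ := hwit (d • g) (d • g) hdg hepst
      rw [ht', ht]
      -- compare the two canonical forms of A
      obtain ⟨x, hsx⟩ := hex v₀ hv₀
      have heq : (2 * lam * σ v₀ x) • v₀ = (2 * lam' * σ v₁ x) • v₁ := by
        rw [← hAform x, ← hAform' x]
      have hlamne : lam ≠ 0 := by
        intro h
        apply hA0
        ext x'
        rw [hAform x', h]
        simp
      have hlamne' : lam' ≠ 0 := by
        intro h
        apply hA0
        ext x'
        rw [hAform' x', h]
        simp
      have hs1 : σ v₁ x ≠ 0 := by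
        intro h
        rw [h, mul_zero, zero_smul] at heq
        rcases smul_eq_zero.mp heq with h' | h'
        · exact hsx (by
            have : (2 : ℂ) * lam ≠ 0 := mul_ne_zero two_ne_zero hlamne
            exact (mul_eq_zero.mp h').resolve_left this)
        · exact hv₀ h'
      have hmune : (2 * lam' * σ v₁ x) ≠ 0 :=
        mul_ne_zero (mul_ne_zero two_ne_zero hlamne') hs1
      set μ : ℂ := (2 * lam' * σ v₁ x)⁻¹ * (2 * lam * σ v₀ x) with hmu
      have hv₁eq : v₁ = μ • v₀ := by
        have := hsolve (2 * lam' * σ v₁ x) v₁ ((2 * lam * σ v₀ x) • v₀) hmune heq.symm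
        rwa [smul_smul] at this
      -- from heq with v₁ = μ • v₀ : lam = lam' * μ²
      have hkey : lam = lam' * μ ^ 2 := by
        have h := heq
        rw [hv₁eq, map_smul] at h
        simp only [LinearMap.smul_apply, smul_eq_mul, smul_smul] at h
        have h2 : (2 * lam * σ v₀ x - 2 * lam' * (μ * σ v₀ x) * μ) • v₀ = 0 := by
          linear_combination (norm := module) h
        have h3 := (smul_eq_zero.mp h2).resolve_right hv₀
        have h4 : (2 * σ v₀ x) * (lam - lam' * μ ^ 2) = 0 := by
          linear_combination h3
        have h5 := (mul_eq_zero.mp h4).resolve_left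
          (mul_ne_zero two_ne_zero hsx)
        linear_combination h5
      rw [hv₁eq, hkey]
      simp only [TensorProduct.tmul_smul, TensorProduct.smul_tmul', smul_smul]
      congr 1
      ring
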